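/- Let (A, R) be a Rota–Baxter algebra of weight 1 over a field K of characteristic zero, regard A as a Lie algebra under the commutator [x, y] = xy − yx, let U(A) be its universal enveloping algebra with canonical embedding ι : A → U(A), and for x ∈ A define the Grossman–Larson powers x^{∗0} := 1 and x^{∗(n+1)} := ι(x)·x^{∗n} + ι(R(x))·x^{∗n} − x^{∗n}·ι(R(x)) in U(A). Then in the formal power series ring U(A)⟦t⟧ the identity exp^{∗}(tx) = exp(−t·ι(R̃(x)))·exp(−t·ι(R(x))) holds, i.e., Σ_{n≥0} (tⁿ/n!)·x^{∗n} = ( Σ_{n≥0} tⁿ·ι(x + R(x))ⁿ/n! )·( Σ_{n≥0} tⁿ·(−ι(R(x)))ⁿ/n! ), where R̃ := −id_A − R so that −R̃(x) = x + R(x). -/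

import Mathlib

attribute [local instance 100] LieRing.ofAssociativeRing

/-- Regard the ring `A` as a Lie algebra under the commutator; `ι` is the canonical embedding
into the universal enveloping algebra. -/
noncomputable abbrev ueι (K : Type*) {A : Type*} [Field K] [Ring A] [Algebra K A] :
    A →ₗ⁅K⁆ UniversalEnvelopingAlgebra K A :=
  UniversalEnvelopingAlgebra.ι K

/-- The `n`-th Grossman–Larson power `x^{∗n}` of `x ∈ A` in `U(A)`, for the post-Lie structure
`x ▷ y = [R x, y]` of a weight-one Rota–Baxter algebra `(A, R)`:
`x^{∗0} = 1`, `x^{∗(n+1)} = x ∗ x^{∗n} = ι x · x^{∗n} + ι (R x) · x^{∗n} - x^{∗n} · ι (R x)`. -/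
noncomputable def glPow {K A : Type*} [Field K] [CharZero K] [Ring A] [Algebra K A]
    (R : A →ₗ[K] A) (x : A) : ℕ → UniversalEnvelopingAlgebra K A
  | 0 => 1
  | n + 1 =>
      ueι K x * glPow R x n + ueι K (R x) * glPow R x n - glPow R x n * ueι K (R x)

/-- The formal derivative `d/dt` on `S⟦t⟧` (coefficientwise, valid over a noncommutative
ring). -/
noncomputable def psDeriv {S : Type*} [Ring S] (f : PowerSeries S) : PowerSeries S :=
  PowerSeries.mk fun n => (n + 1 : ℕ) • PowerSeries.coeff (n + 1) f

/-- The power series `exp(t·u) = Σ_{n≥0} tⁿ·uⁿ/n!` in `S⟦t⟧`, for `u` in a `K`-algebra `S`. -/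
noncomputable def expSeries (K : Type*) {S : Type*} [Field K] [CharZero K] [Ring S]
    [Algebra K S] (u : S) : PowerSeries S :=
  PowerSeries.mk fun n => ((n.factorial : K)⁻¹) • u ^ n

lemma glPow_eq {K A : Type*} [Field K] [CharZero K] [Ring A] [Algebra K A]
    (R : A →ₗ[K] A) (x : A) (n : ℕ) :
    glPow R x n = ∑ k ∈ Finset.range (n + 1),
      (n.choose k) • ((ueι K (x + R x)) ^ k * (-(ueι K (R x))) ^ (n - k)) := by
  set a := (ueι K (x + R x) : UniversalEnvelopingAlgebra K A) with ha
  set b := (-(ueι K (R x)) : UniversalEnvelopingAlgebra K A) with hb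
  induction n with
  | zero => simp [glPow]
  | succ n ih =>
    have hstep : glPow R x (n+1) = a * glPow R x n + glPow R x n * b := by
      simp only [glPow, ha, hb, map_add]
      noncomm_ring
    rw [hstep, ih, Finset.mul_sum, Finset.sum_mul]
    have h1 : ∀ k ∈ Finset.range (n+1),
        a * ((n.choose k) • (a ^ k * b ^ (n - k))) =
        (n.choose k) • (a ^ (k+1) * b ^ (n + 1 - (k+1))) := by
      intro k hk
      rw [mul_smul_comm, ← mul_assoc, ← pow_succ']
      congr 3
      omega
    have h2 : ∀ k ∈ Finset.range (n+1),
        ((n.choose k) • (a ^ k * b ^ (n - k))) * b =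
        (n.choose k) • (a ^ k * b ^ (n + 1 - k)) := by
      intro k hk
      simp only [Finset.mem_range] at hk
      rw [smul_mul_assoc, mul_assoc, ← pow_succ]
      congr 3
      omega
    rw [Finset.sum_congr rfl h1, Finset.sum_congr rfl h2]
    rw [Finset.sum_range_succ' (fun k => ((n+1).choose k) • (a ^ k * b ^ (n + 1 - k))) (n+1)]
    simp only [Nat.choose_succ_succ, add_smul, Finset.sum_add_distrib]
    have h3 : (∑ k ∈ Finset.range (n+1), (n.choose (k+1)) • (a ^ (k+1) * b ^ (n + 1 - (k+1))))
        + ((n+1).choose 0) • (a ^ 0 * b ^ (n + 1 - 0))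
        = ∑ k ∈ Finset.range (n+1), (n.choose k) • (a ^ k * b ^ (n + 1 - k)) := by
      rw [show (n+1).choose 0 = n.choose 0 from by simp,
        ← Finset.sum_range_succ' (fun k => (n.choose k) • (a ^ k * b ^ (n + 1 - k))) (n+1)]
      rw [Finset.sum_range_succ]
      simp
    rw [add_assoc, h3]
  done

/-- For a Rota–Baxter algebra `(A, R)` of weight `1` over a field `K` of
characteristic zero, with `R̃ := -id - R` (so `-R̃ x = x + R x`), one has in `U(A)⟦t⟧` the
identity `exp^{∗}(tx) = exp(-t·ι(R̃ x)) · exp(-t·ι(R x))`, i.e.,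
`Σ_{n≥0} (tⁿ/n!) x^{∗n} = (Σ tⁿ ι(x + R x)ⁿ/n!) · (Σ tⁿ (-ι(R x))ⁿ/n!)`. -/
theorem gl_exponential_factorization {K A : Type*} [Field K] [CharZero K]
    [Ring A] [Algebra K A] (R : A →ₗ[K] A)
    (hRB : ∀ x y : A, R x * R y = R (R x * y + x * R y + x * y)) (x : A) :
    (PowerSeries.mk fun n => ((n.factorial : K)⁻¹) • glPow R x n) =
      expSeries K (ueι K (x + R x)) * expSeries K (-(ueι K (R x))) := by
  ext n
  rw [PowerSeries.coeff_mk, PowerSeries.coeff_mul,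
    Finset.Nat.sum_antidiagonal_eq_sum_range_succ_mk]
  simp only [expSeries, PowerSeries.coeff_mk]
  rw [glPow_eq, Finset.smul_sum]
  refine Finset.sum_congr rfl fun k hk => ?_
  simp only [Finset.mem_range, Nat.lt_succ_iff] at hk
  rw [smul_mul_smul_comm, ← Nat.cast_smul_eq_nsmul K, smul_smul]
  congr 1
  have h := Nat.choose_mul_factorial_mul_factorial hk
  have h1 : ((n.factorial : K)) ≠ 0 := Nat.cast_ne_zero.mpr n.factorial_ne_zero
  have h2 : ((k.factorial : K)) ≠ 0 := Nat.cast_ne_zero.mpr k.factorial_ne_zero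
  have h3 : (((n-k).factorial : K)) ≠ 0 := Nat.cast_ne_zero.mpr (n-k).factorial_ne_zero
  field_simp
  push_cast [← h]
  ring
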